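/- There exists a single-commodity routing instance with affine latency functions and a value θ = 3/2 such that none of the three sets — the set of 3/2-PNE path flows, the set of 3/2-UNE path flows, and the set of 3/2-EF path flows — is convex: each set contains two path flows whose midpoint (averaging path-flow values coordinatewise) does not belong to the set. -/

import Mathlib

open scoped BigOperators

/-- A routing instance: a finite directed (multi)graph given by source/target maps
on edges, a finite set of commodities with sources, sinks, demands, and
load-dependent latency functions on edges. -/
structure RoutingInstance (V E K : Type*) where
  src : E → V
  tgt : E → V
  source : K → V
  sink : K → V
  demand : K → ℝ
  latency : E → ℝ → ℝ

namespace RoutingInstance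

variable {V E K : Type*} [Fintype V] [Fintype E] [Fintype K] [DecidableEq E]

/-- Standard assumptions: positive demands, latencies nonnegative and
nondecreasing on `[0, ∞)`. -/
def Standard (G : RoutingInstance V E K) : Prop :=
  (∀ k, 0 < G.demand k) ∧
  (∀ e x, (0:ℝ) ≤ x → 0 ≤ G.latency e x) ∧
  (∀ e, MonotoneOn (G.latency e) (Set.Ici (0:ℝ)))

/-- `G.IsWalkFrom s t l` : the list of edges `l` is a directed walk from `s` to `t`. -/
def IsWalkFrom (G : RoutingInstance V E K) : V → V → List E → Prop
  | s, t, [] => s = t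
  | s, t, e :: es => G.src e = s ∧ IsWalkFrom G (G.tgt e) t es

/-- The list of vertices visited by a walk starting at `s`. -/
def walkVerts (G : RoutingInstance V E K) (s : V) (l : List E) : List V :=
  s :: l.map G.tgt

/-- A simple directed path from the source of commodity `k` to its sink. -/
def IsPathOf (G : RoutingInstance V E K) (k : K) (p : List E) : Prop :=
  G.IsWalkFrom (G.source k) (G.sink k) p ∧ (G.walkVerts (G.source k) p).Nodup

/-- A feasible path flow: nonnegative, supported on simple `s_k`-`t_k` paths,
and routing the whole demand of each commodity. -/
def Feasible (G : RoutingInstance V E K) (f : K → (List E →₀ ℝ)) : Prop :=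
  (∀ k p, 0 ≤ f k p) ∧
  (∀ k p, f k p ≠ 0 → G.IsPathOf k p) ∧
  (∀ k, ((f k).sum fun _ v => v) = G.demand k)

/-- Edge flow of commodity `k` induced by a path flow. -/
def edgeFlowK (G : RoutingInstance V E K) (f : K → (List E →₀ ℝ)) (k : K) (e : E) : ℝ :=
  (f k).sum fun p v => if e ∈ p then v else 0

/-- Total edge flow induced by a path flow. -/
def edgeFlow (G : RoutingInstance V E K) (f : K → (List E →₀ ℝ)) (e : E) : ℝ :=
  ∑ k, G.edgeFlowK f k e

/-- Latency (cost) of a path under the edge flows induced by the path flow `f`. -/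
def pathCost (G : RoutingInstance V E K) (f : K → (List E →₀ ℝ)) (p : List E) : ℝ :=
  (p.map fun e => G.latency e (G.edgeFlow f e)).sum

/-- A path is used by commodity `k` if it carries positive flow in `f`. -/
def Used (G : RoutingInstance V E K) (f : K → (List E →₀ ℝ)) (k : K) (p : List E) : Prop :=
  0 < f k p

/-- A path is positive for commodity `k` if each of its edges carries positive
commodity-`k` flow. -/
def PositivePath (G : RoutingInstance V E K) (f : K → (List E →₀ ℝ)) (k : K) (p : List E) :
    Prop :=
  G.IsPathOf k p ∧ ∀ e ∈ p, 0 < G.edgeFlowK f k e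

/-- θ-Positive Nash Equilibrium (a property of the induced edge flow):
every positive path costs at most θ times any path of the same commodity. -/
def IsPNE (G : RoutingInstance V E K) (θ : ℝ) (f : K → (List E →₀ ℝ)) : Prop :=
  ∀ k p q, G.PositivePath f k p → G.IsPathOf k q →
    G.pathCost f p ≤ θ * G.pathCost f q

/-- θ-Used Nash Equilibrium: every used path costs at most θ times any path
of the same commodity. -/
def IsUNE (G : RoutingInstance V E K) (θ : ℝ) (f : K → (List E →₀ ℝ)) : Prop :=
  ∀ k p q, G.Used f k p → G.IsPathOf k q →
    G.pathCost f p ≤ θ * G.pathCost f q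

/-- θ-Envy Free: every used path costs at most θ times any used path
of the same commodity. -/
def IsEF (G : RoutingInstance V E K) (θ : ℝ) (f : K → (List E →₀ ℝ)) : Prop :=
  ∀ k p q, G.Used f k p → G.Used f k q →
    G.pathCost f p ≤ θ * G.pathCost f q

/-- Social cost of a path flow. -/
def socialCost (G : RoutingInstance V E K) (f : K → (List E →₀ ℝ)) : ℝ :=
  ∑ e, G.edgeFlow f e * G.latency e (G.edgeFlow f e)

end RoutingInstance

section Example
open RoutingInstance

def GA : Fin 5 → ℝ := fun e => if e.val = 3 then 1 else 0
def GB : Fin 5 → ℝ := fun e => if e.val = 2 ∨ e.val = 4 then 0 else 1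

def Gex : RoutingInstance (Fin 4) (Fin 5) Unit where
  src := ![0, 1, 0, 2, 1]
  tgt := ![1, 3, 2, 3, 2]
  source := fun _ => 0
  sink := fun _ => 3
  demand := fun _ => 1
  latency := fun e x => GA e * x + GB e

def Pu : List (Fin 5) := [0, 1]
def Pv : List (Fin 5) := [2, 3]
def Pz : List (Fin 5) := [0, 4, 3]

lemma w3 : ∀ p, Gex.IsWalkFrom 3 3 p → p = [] := by
  intro p hp
  cases p with
  | nil => rfl
  | cons e es =>
    obtain ⟨h1, -⟩ := hp
    fin_cases e
    · exact absurd h1 (by decide)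
    · exact absurd h1 (by decide)
    · exact absurd h1 (by decide)
    · exact absurd h1 (by decide)
    · exact absurd h1 (by decide)

lemma w2 : ∀ p, Gex.IsWalkFrom 2 3 p → p = [3] := by
  intro p hp
  cases p with
  | nil => simp [RoutingInstance.IsWalkFrom] at hp
  | cons e es =>
    obtain ⟨h1, h2⟩ := hp
    fin_cases e
    · exact absurd h1 (by decide)
    · exact absurd h1 (by decide)
    · exact absurd h1 (by decide)
    · have : es = [] := w3 es h2
      simp [this]
    · exact absurd h1 (by decide)

lemma w1 : ∀ p, Gex.IsWalkFrom 1 3 p → p = [1] ∨ p = [4, 3] := by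
  intro p hp
  cases p with
  | nil => simp [RoutingInstance.IsWalkFrom] at hp
  | cons e es =>
    obtain ⟨h1, h2⟩ := hp
    fin_cases e
    · exact absurd h1 (by decide)
    · have : es = [] := w3 es h2
      simp [this]
    · exact absurd h1 (by decide)
    · exact absurd h1 (by decide)
    · have : es = [3] := w2 es h2
      simp [this]

lemma w0 : ∀ p, Gex.IsWalkFrom 0 3 p → p = Pu ∨ p = Pv ∨ p = Pz := by
  intro p hp
  cases p with
  | nil => simp [RoutingInstance.IsWalkFrom] at hp
  | cons e es =>
    obtain ⟨h1, h2⟩ := hp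
    fin_cases e
    · rcases w1 es h2 with h | h <;> simp [h, Pu, Pv, Pz]
    · exact absurd h1 (by decide)
    · have : es = [3] := w2 es h2
      simp [this, Pu, Pv, Pz]
    · exact absurd h1 (by decide)
    · exact absurd h1 (by decide)

lemma classify (p : List (Fin 5)) (hp : Gex.IsPathOf () p) : p = Pu ∨ p = Pv ∨ p = Pz :=
  w0 p hp.1

end Example
section Example2
open RoutingInstance

noncomputable def F1 : List (Fin 5) →₀ ℝ := Finsupp.single Pz 1
noncomputable def F2 : List (Fin 5) →₀ ℝ :=
  Finsupp.single Pu (1/2) + Finsupp.single Pv (1/2)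

lemma sum_add' (a b : List (Fin 5) →₀ ℝ) (h : List (Fin 5) → ℝ → ℝ)
    (h0 : ∀ p, h p 0 = 0) (hadd : ∀ p a b, h p (a + b) = h p a + h p b) :
    (a + b).sum h = a.sum h + b.sum h :=
  Finsupp.sum_add_index' h0 hadd

lemma F1_sum (h : List (Fin 5) → ℝ → ℝ) (h0 : ∀ p, h p 0 = 0) :
    F1.sum h = h Pz 1 := Finsupp.sum_single_index (h0 _)

lemma F2_sum (h : List (Fin 5) → ℝ → ℝ) (h0 : ∀ p, h p 0 = 0)
    (hadd : ∀ p a b, h p (a + b) = h p a + h p b) :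
    F2.sum h = h Pu (1/2) + h Pv (1/2) := by
  rw [F2, sum_add' _ _ h h0 hadd, Finsupp.sum_single_index (h0 _),
    Finsupp.sum_single_index (h0 _)]

lemma mid_eq : ((2⁻¹ : ℝ) • (F1 + F2)) =
    Finsupp.single Pz (1/2) + (Finsupp.single Pu (1/4) + Finsupp.single Pv (1/4)) := by
  rw [F1, F2, smul_add, smul_add, Finsupp.smul_single, Finsupp.smul_single,
    Finsupp.smul_single]
  norm_num

lemma mid_sum (h : List (Fin 5) → ℝ → ℝ) (h0 : ∀ p, h p 0 = 0)
    (hadd : ∀ p a b, h p (a + b) = h p a + h p b) :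
    ((2⁻¹ : ℝ) • (F1 + F2)).sum h = h Pz (1/2) + (h Pu (1/4) + h Pv (1/4)) := by
  rw [mid_eq, sum_add' _ _ h h0 hadd, sum_add' _ _ h h0 hadd,
    Finsupp.sum_single_index (h0 _), Finsupp.sum_single_index (h0 _),
    Finsupp.sum_single_index (h0 _)]

-- edge flows
lemma ef0 : ∀ q v : List (Fin 5) → ℝ → ℝ, True := fun _ _ => trivial

lemma edgeFlowK_F1 (e : Fin 5) :
    Gex.edgeFlowK (fun _ => F1) () e = if e ∈ Pz then 1 else 0 := by
  rw [RoutingInstance.edgeFlowK, F1_sum _ (by intro p; simp)]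

lemma edgeFlowK_F2 (e : Fin 5) :
    Gex.edgeFlowK (fun _ => F2) () e =
      (if e ∈ Pu then (1:ℝ)/2 else 0) + (if e ∈ Pv then (1:ℝ)/2 else 0) := by
  rw [RoutingInstance.edgeFlowK, F2_sum _ (by intro p; simp)
    (by intro p a b; split <;> simp)]

lemma edgeFlowK_mid (e : Fin 5) :
    Gex.edgeFlowK (fun _ => (2⁻¹ : ℝ) • (F1 + F2)) () e =
      (if e ∈ Pz then (1:ℝ)/2 else 0) +
        ((if e ∈ Pu then (1:ℝ)/4 else 0) + (if e ∈ Pv then (1:ℝ)/4 else 0)) := by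
  rw [RoutingInstance.edgeFlowK, mid_sum _ (by intro p; simp)
    (by intro p a b; split <;> simp)]

lemma edgeFlow_eq (f : Unit → (List (Fin 5) →₀ ℝ)) (e : Fin 5) :
    Gex.edgeFlow f e = Gex.edgeFlowK f () e := by
  rw [RoutingInstance.edgeFlow]
  simp

end Example2
section Example3
open RoutingInstance

lemma finval : ((0:Fin 5)).val = 0 ∧ ((1:Fin 5)).val = 1 ∧ ((2:Fin 5)).val = 2 ∧
    ((3:Fin 5)).val = 3 ∧ ((4:Fin 5)).val = 4 := by decide

lemma GAval : GA 0 = 0 ∧ GA 1 = 0 ∧ GA 2 = 0 ∧ GA 3 = 1 ∧ GA 4 = 0 := by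
  norm_num [GA, finval.1, finval.2.1, finval.2.2.1, finval.2.2.2.1, finval.2.2.2.2]

lemma GBval : GB 0 = 1 ∧ GB 1 = 1 ∧ GB 2 = 0 ∧ GB 3 = 1 ∧ GB 4 = 0 := by
  norm_num [GB, finval.1, finval.2.1, finval.2.2.1, finval.2.2.2.1, finval.2.2.2.2]

lemma lat_eq (e : Fin 5) (x : ℝ) : Gex.latency e x = GA e * x + GB e := rfl

lemma GAnn (e : Fin 5) : 0 ≤ GA e := by rw [GA]; split <;> norm_num
lemma GBnn (e : Fin 5) : 0 ≤ GB e := by rw [GB]; split <;> norm_num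

lemma cost_F1_Pu : Gex.pathCost (fun _ => F1) Pu = 2 := by
  simp only [RoutingInstance.pathCost, Pu, Pv, Pz, List.map_cons, List.map_nil, List.sum_cons,
    List.sum_nil, edgeFlow_eq, edgeFlowK_F1, lat_eq, GAval.1, GAval.2.1, GAval.2.2.1,
    GAval.2.2.2.1, GAval.2.2.2.2, GBval.1, GBval.2.1, GBval.2.2.1, GBval.2.2.2.1, GBval.2.2.2.2]
  norm_num [(by decide : ¬((3:Fin 5) = 0 ∨ (3:Fin 5) = 1))]

lemma cost_F1_Pv : Gex.pathCost (fun _ => F1) Pv = 2 := by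
  simp only [RoutingInstance.pathCost, Pu, Pv, Pz, List.map_cons, List.map_nil, List.sum_cons,
    List.sum_nil, edgeFlow_eq, edgeFlowK_F1, lat_eq, GAval.1, GAval.2.1, GAval.2.2.1,
    GAval.2.2.2.1, GAval.2.2.2.2, GBval.1, GBval.2.1, GBval.2.2.1, GBval.2.2.2.1, GBval.2.2.2.2]
  norm_num [(by decide : ¬((3:Fin 5) = 0 ∨ (3:Fin 5) = 1))]

lemma cost_F1_Pz : Gex.pathCost (fun _ => F1) Pz = 3 := by
  simp only [RoutingInstance.pathCost, Pu, Pv, Pz, List.map_cons, List.map_nil, List.sum_cons,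
    List.sum_nil, edgeFlow_eq, edgeFlowK_F1, lat_eq, GAval.1, GAval.2.1, GAval.2.2.1,
    GAval.2.2.2.1, GAval.2.2.2.2, GBval.1, GBval.2.1, GBval.2.2.1, GBval.2.2.2.1, GBval.2.2.2.2]
  norm_num [(by decide : ¬((3:Fin 5) = 0 ∨ (3:Fin 5) = 1))]

lemma cost_F2_Pu : Gex.pathCost (fun _ => F2) Pu = 2 := by
  simp only [RoutingInstance.pathCost, Pu, Pv, Pz, List.map_cons, List.map_nil, List.sum_cons,
    List.sum_nil, edgeFlow_eq, edgeFlowK_F2, lat_eq, GAval.1, GAval.2.1, GAval.2.2.1,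
    GAval.2.2.2.1, GAval.2.2.2.2, GBval.1, GBval.2.1, GBval.2.2.1, GBval.2.2.2.1, GBval.2.2.2.2]
  norm_num [(by decide : ¬((3:Fin 5) = 0 ∨ (3:Fin 5) = 1))]

lemma cost_F2_Pv : Gex.pathCost (fun _ => F2) Pv = 3/2 := by
  simp only [RoutingInstance.pathCost, Pu, Pv, Pz, List.map_cons, List.map_nil, List.sum_cons,
    List.sum_nil, edgeFlow_eq, edgeFlowK_F2, lat_eq, GAval.1, GAval.2.1, GAval.2.2.1,
    GAval.2.2.2.1, GAval.2.2.2.2, GBval.1, GBval.2.1, GBval.2.2.1, GBval.2.2.2.1, GBval.2.2.2.2]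
  norm_num [(by decide : ¬((3:Fin 5) = 0 ∨ (3:Fin 5) = 1))]

lemma cost_F2_Pz : Gex.pathCost (fun _ => F2) Pz = 5/2 := by
  simp only [RoutingInstance.pathCost, Pu, Pv, Pz, List.map_cons, List.map_nil, List.sum_cons,
    List.sum_nil, edgeFlow_eq, edgeFlowK_F2, lat_eq, GAval.1, GAval.2.1, GAval.2.2.1,
    GAval.2.2.2.1, GAval.2.2.2.2, GBval.1, GBval.2.1, GBval.2.2.1, GBval.2.2.2.1, GBval.2.2.2.2]
  norm_num [(by decide : ¬((3:Fin 5) = 0 ∨ (3:Fin 5) = 1))]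

lemma cost_mid_Pu : Gex.pathCost (fun _ => (2⁻¹ : ℝ) • (F1 + F2)) Pu = 2 := by
  simp only [RoutingInstance.pathCost, Pu, Pv, Pz, List.map_cons, List.map_nil, List.sum_cons,
    List.sum_nil, edgeFlow_eq, edgeFlowK_mid, lat_eq, GAval.1, GAval.2.1, GAval.2.2.1,
    GAval.2.2.2.1, GAval.2.2.2.2, GBval.1, GBval.2.1, GBval.2.2.1, GBval.2.2.2.1, GBval.2.2.2.2]
  norm_num [(by decide : ¬((3:Fin 5) = 0 ∨ (3:Fin 5) = 1))]

lemma cost_mid_Pv : Gex.pathCost (fun _ => (2⁻¹ : ℝ) • (F1 + F2)) Pv = 7/4 := by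
  simp only [RoutingInstance.pathCost, Pu, Pv, Pz, List.map_cons, List.map_nil, List.sum_cons,
    List.sum_nil, edgeFlow_eq, edgeFlowK_mid, lat_eq, GAval.1, GAval.2.1, GAval.2.2.1,
    GAval.2.2.2.1, GAval.2.2.2.2, GBval.1, GBval.2.1, GBval.2.2.1, GBval.2.2.2.1, GBval.2.2.2.2]
  norm_num [(by decide : ¬((3:Fin 5) = 0 ∨ (3:Fin 5) = 1))]

lemma cost_mid_Pz : Gex.pathCost (fun _ => (2⁻¹ : ℝ) • (F1 + F2)) Pz = 11/4 := by
  simp only [RoutingInstance.pathCost, Pu, Pv, Pz, List.map_cons, List.map_nil, List.sum_cons,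
    List.sum_nil, edgeFlow_eq, edgeFlowK_mid, lat_eq, GAval.1, GAval.2.1, GAval.2.2.1,
    GAval.2.2.2.1, GAval.2.2.2.2, GBval.1, GBval.2.1, GBval.2.2.1, GBval.2.2.2.1, GBval.2.2.2.2]
  norm_num [(by decide : ¬((3:Fin 5) = 0 ∨ (3:Fin 5) = 1))]

end Example3
section Example4
open RoutingInstance

lemma path_Pz : Gex.IsPathOf () Pz :=
  ⟨⟨by decide, by decide, by decide, (by decide : Gex.tgt 3 = (3:Fin 4))⟩, by decide⟩

lemma path_Pu : Gex.IsPathOf () Pu :=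
  ⟨⟨by decide, by decide, (by decide : Gex.tgt 1 = (3:Fin 4))⟩, by decide⟩

lemma path_Pv : Gex.IsPathOf () Pv :=
  ⟨⟨by decide, by decide, (by decide : Gex.tgt 3 = (3:Fin 4))⟩, by decide⟩

lemma F1_apply (p : List (Fin 5)) : F1 p = if Pz = p then 1 else 0 :=
  Finsupp.single_apply

lemma F2_apply (p : List (Fin 5)) :
    F2 p = (if Pu = p then (1:ℝ)/2 else 0) + (if Pv = p then (1:ℝ)/2 else 0) := by
  rw [F2, Finsupp.add_apply, Finsupp.single_apply, Finsupp.single_apply]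

lemma mid_apply (p : List (Fin 5)) :
    ((2⁻¹ : ℝ) • (F1 + F2)) p = (if Pz = p then (1:ℝ)/2 else 0) +
      ((if Pu = p then (1:ℝ)/4 else 0) + (if Pv = p then (1:ℝ)/4 else 0)) := by
  rw [mid_eq, Finsupp.add_apply, Finsupp.add_apply, Finsupp.single_apply,
    Finsupp.single_apply, Finsupp.single_apply]

lemma feas_F1 : Gex.Feasible (fun _ => F1) := by
  refine ⟨fun k p => ?_, fun k p hne => ?_, fun k => ?_⟩
  · rw [F1_apply]; split <;> norm_num
  · rw [F1_apply] at hne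
    split at hne
    · next h => rw [← h]; exact path_Pz
    · exact absurd rfl hne
  · rw [F1_sum _ (fun p => rfl)]; rfl

lemma feas_F2 : Gex.Feasible (fun _ => F2) := by
  refine ⟨fun k p => ?_, fun k p hne => ?_, fun k => ?_⟩
  · rw [F2_apply]; split <;> split <;> norm_num
  · rw [F2_apply] at hne
    rcases eq_or_ne Pu p with h | h
    · rw [← h]; exact path_Pu
    rcases eq_or_ne Pv p with h' | h'
    · rw [← h']; exact path_Pv
    · rw [if_neg h, if_neg h'] at hne; exact absurd (by norm_num) hne
  · rw [F2_sum _ (fun p => rfl) (fun p a b => rfl)]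
    show (1:ℝ)/2 + 1/2 = 1; norm_num

lemma feas_mid : Gex.Feasible (fun _ => (2⁻¹ : ℝ) • (F1 + F2)) := by
  refine ⟨fun k p => ?_, fun k p hne => ?_, fun k => ?_⟩
  · rw [mid_apply]; split <;> split <;> split <;> norm_num
  · rw [mid_apply] at hne
    rcases eq_or_ne Pz p with h | h
    · rw [← h]; exact path_Pz
    rcases eq_or_ne Pu p with h' | h'
    · rw [← h']; exact path_Pu
    rcases eq_or_ne Pv p with h'' | h''
    · rw [← h'']; exact path_Pv
    · rw [if_neg h, if_neg h', if_neg h''] at hne; exact absurd (by norm_num) hne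
  · rw [mid_sum _ (fun p => rfl) (fun p a b => rfl)]
    show (1:ℝ)/2 + (1/4 + 1/4) = 1; norm_num

lemma pne_F1 : Gex.IsPNE (3/2) (fun _ => F1) := by
  intro k p q hp hq
  cases k
  rcases classify p hp.1 with rfl | rfl | rfl
  · have h1 := hp.2 1 (by simp [Pu])
    rw [edgeFlowK_F1, if_neg (by decide : ¬(1:Fin 5) ∈ Pz)] at h1
    norm_num at h1
  · have h1 := hp.2 2 (by simp [Pv])
    rw [edgeFlowK_F1, if_neg (by decide : ¬(2:Fin 5) ∈ Pz)] at h1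
    norm_num at h1
  · rcases classify q hq with rfl | rfl | rfl
    · rw [cost_F1_Pz, cost_F1_Pu]; norm_num
    · rw [cost_F1_Pz, cost_F1_Pv]; norm_num
    · rw [cost_F1_Pz]; norm_num

lemma pne_F2 : Gex.IsPNE (3/2) (fun _ => F2) := by
  intro k p q hp hq
  cases k
  rcases classify p hp.1 with rfl | rfl | rfl
  · rcases classify q hq with rfl | rfl | rfl
    · rw [cost_F2_Pu]; norm_num
    · rw [cost_F2_Pu, cost_F2_Pv]; norm_num
    · rw [cost_F2_Pu, cost_F2_Pz]; norm_num
  · rcases classify q hq with rfl | rfl | rfl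
    · rw [cost_F2_Pv, cost_F2_Pu]; norm_num
    · rw [cost_F2_Pv]; norm_num
    · rw [cost_F2_Pv, cost_F2_Pz]; norm_num
  · have h1 := hp.2 4 (by simp [Pz])
    rw [edgeFlowK_F2, if_neg (by decide : ¬(4:Fin 5) ∈ Pu),
      if_neg (by decide : ¬(4:Fin 5) ∈ Pv)] at h1
    norm_num at h1

lemma used_imp_F1 (k : Unit) (p : List (Fin 5)) (h : Gex.Used (fun _ => F1) k p) :
    p = Pz := by
  have := h
  rw [RoutingInstance.Used, F1_apply] at this
  split at this
  · next h' => exact h'.symm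
  · norm_num at this

lemma une_F1 : Gex.IsUNE (3/2) (fun _ => F1) := by
  intro k p q hp hq
  rw [used_imp_F1 k p hp]
  rcases classify q hq with rfl | rfl | rfl
  · rw [cost_F1_Pz, cost_F1_Pu]; norm_num
  · rw [cost_F1_Pz, cost_F1_Pv]; norm_num
  · rw [cost_F1_Pz]; norm_num

lemma ef_F1 : Gex.IsEF (3/2) (fun _ => F1) := by
  intro k p q hp hq
  rw [used_imp_F1 k p hp, used_imp_F1 k q hq, cost_F1_Pz]
  norm_num

lemma used_imp_F2 (k : Unit) (p : List (Fin 5)) (h : Gex.Used (fun _ => F2) k p) :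
    p = Pu ∨ p = Pv := by
  have := h
  rw [RoutingInstance.Used, F2_apply] at this
  rcases eq_or_ne Pu p with h' | h'
  · exact Or.inl h'.symm
  rcases eq_or_ne Pv p with h'' | h''
  · exact Or.inr h''.symm
  · rw [if_neg h', if_neg h''] at this; norm_num at this

lemma une_F2 : Gex.IsUNE (3/2) (fun _ => F2) := by
  intro k p q hp hq
  rcases used_imp_F2 k p hp with rfl | rfl
  · rcases classify q hq with rfl | rfl | rfl
    · rw [cost_F2_Pu]; norm_num
    · rw [cost_F2_Pu, cost_F2_Pv]; norm_num
    · rw [cost_F2_Pu, cost_F2_Pz]; norm_num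
  · rcases classify q hq with rfl | rfl | rfl
    · rw [cost_F2_Pv, cost_F2_Pu]; norm_num
    · rw [cost_F2_Pv]; norm_num
    · rw [cost_F2_Pv, cost_F2_Pz]; norm_num

lemma ef_F2 : Gex.IsEF (3/2) (fun _ => F2) := by
  intro k p q hp hq
  rcases used_imp_F2 k p hp with rfl | rfl <;> rcases used_imp_F2 k q hq with rfl | rfl
  · rw [cost_F2_Pu]; norm_num
  · rw [cost_F2_Pu, cost_F2_Pv]; norm_num
  · rw [cost_F2_Pv, cost_F2_Pu]; norm_num
  · rw [cost_F2_Pv]; norm_num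

lemma used_mid_Pz : Gex.Used (fun _ => (2⁻¹ : ℝ) • (F1 + F2)) () Pz := by
  rw [RoutingInstance.Used, mid_apply]
  have h1 : Pz ≠ Pu := by decide
  have h2 : Pz ≠ Pv := by decide
  rw [if_pos rfl, if_neg (fun h => h1 h.symm), if_neg (fun h => h2 h.symm)]
  norm_num

lemma used_mid_Pv : Gex.Used (fun _ => (2⁻¹ : ℝ) • (F1 + F2)) () Pv := by
  rw [RoutingInstance.Used, mid_apply]
  have h1 : Pv ≠ Pz := by decide
  have h2 : Pv ≠ Pu := by decide
  rw [if_pos rfl, if_neg (fun h => h1 h.symm), if_neg (fun h => h2 h.symm)]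
  norm_num

lemma pos_mid_Pz : Gex.PositivePath (fun _ => (2⁻¹ : ℝ) • (F1 + F2)) () Pz := by
  refine ⟨path_Pz, fun e he => ?_⟩
  rw [edgeFlowK_mid]
  have : e = 0 ∨ e = 4 ∨ e = 3 := by simpa [Pz] using he
  rcases this with rfl | rfl | rfl
  · rw [if_pos (by decide : (0:Fin 5) ∈ Pz), if_pos (by decide : (0:Fin 5) ∈ Pu),
      if_neg (by decide : ¬(0:Fin 5) ∈ Pv)]
    norm_num
  · rw [if_pos (by decide : (4:Fin 5) ∈ Pz), if_neg (by decide : ¬(4:Fin 5) ∈ Pu),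
      if_neg (by decide : ¬(4:Fin 5) ∈ Pv)]
    norm_num
  · rw [if_pos (by decide : (3:Fin 5) ∈ Pz), if_neg (by decide : ¬(3:Fin 5) ∈ Pu),
      if_pos (by decide : (3:Fin 5) ∈ Pv)]
    norm_num

lemma mid_bad : ¬ (Gex.pathCost (fun _ => (2⁻¹ : ℝ) • (F1 + F2)) Pz ≤
    (3/2) * Gex.pathCost (fun _ => (2⁻¹ : ℝ) • (F1 + F2)) Pv) := by
  rw [cost_mid_Pz, cost_mid_Pv]
  norm_num

end Example4
open RoutingInstance in
/-- There exists a single-commodity routing instance with affine latency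
functions such that none of the sets of 3/2-PNE, 3/2-UNE and 3/2-EF path flows is
convex: each contains two path flows whose (coordinatewise) midpoint is a feasible
path flow not belonging to the set. -/
theorem stmt_1 :
    ∃ (nV nE : ℕ) (G : RoutingInstance (Fin nV) (Fin nE) Unit),
      G.Standard ∧
      (∀ e, ∃ a b : ℝ, 0 ≤ a ∧ 0 ≤ b ∧ ∀ x, G.latency e x = a * x + b) ∧
      (∃ f₁ f₂ : Unit → (List (Fin nE) →₀ ℝ), G.Feasible f₁ ∧ G.Feasible f₂ ∧
        G.IsPNE (3/2) f₁ ∧ G.IsPNE (3/2) f₂ ∧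
        G.Feasible (fun k => (2⁻¹ : ℝ) • (f₁ k + f₂ k)) ∧
        ¬ G.IsPNE (3/2) (fun k => (2⁻¹ : ℝ) • (f₁ k + f₂ k))) ∧
      (∃ f₁ f₂ : Unit → (List (Fin nE) →₀ ℝ), G.Feasible f₁ ∧ G.Feasible f₂ ∧
        G.IsUNE (3/2) f₁ ∧ G.IsUNE (3/2) f₂ ∧
        G.Feasible (fun k => (2⁻¹ : ℝ) • (f₁ k + f₂ k)) ∧
        ¬ G.IsUNE (3/2) (fun k => (2⁻¹ : ℝ) • (f₁ k + f₂ k))) ∧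
      (∃ f₁ f₂ : Unit → (List (Fin nE) →₀ ℝ), G.Feasible f₁ ∧ G.Feasible f₂ ∧
        G.IsEF (3/2) f₁ ∧ G.IsEF (3/2) f₂ ∧
        G.Feasible (fun k => (2⁻¹ : ℝ) • (f₁ k + f₂ k)) ∧
        ¬ G.IsEF (3/2) (fun k => (2⁻¹ : ℝ) • (f₁ k + f₂ k))) := by
  refine ⟨4, 5, Gex, ⟨fun k => one_pos, fun e x hx =>
      add_nonneg (mul_nonneg (GAnn e) hx) (GBnn e), fun e x hx y hy hxy => ?_⟩,
    fun e => ⟨GA e, GB e, GAnn e, GBnn e, fun x => rfl⟩, ?_, ?_, ?_⟩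
  · show GA e * x + GB e ≤ GA e * y + GB e
    exact add_le_add_left (mul_le_mul_of_nonneg_left hxy (GAnn e)) _
  · exact ⟨fun _ => F1, fun _ => F2, feas_F1, feas_F2, pne_F1, pne_F2, feas_mid,
      fun h => mid_bad (h () Pz Pv pos_mid_Pz path_Pv)⟩
  · exact ⟨fun _ => F1, fun _ => F2, feas_F1, feas_F2, une_F1, une_F2, feas_mid,
      fun h => mid_bad (h () Pz Pv used_mid_Pz path_Pv)⟩
  · exact ⟨fun _ => F1, fun _ => F2, feas_F1, feas_F2, ef_F1, ef_F2, feas_mid,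
      fun h => mid_bad (h () Pz Pv used_mid_Pz used_mid_Pv)⟩
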